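/- Let ν be a probability measure on α × Fin k, and let Q, Q' be probability measures on Θ with g : Θ × α → Fin k a measurable classifier. Suppose that for ν-almost every (x,y), Q'{θ : g(θ,x) = y} = max_{i ∈ Fin k} Q'{θ : g(θ,x) = i}. Then the Gibbs risk of Q' under ν is bounded by the disagreement: ∫_{α×Fin k} ∫_Θ 1[g(θ',x) ≠ y] dQ'(θ') dν(x,y) ≤ ∫_{α×Fin k} ∫_Θ ∫_Θ 1[g(θ,x) ≠ g(θ',x)] dQ'(θ') dQ(θ) dν(x,y). (First part of the proof of Lemma 2: the risk of the subset-trained posterior on the well-classified distribution D₁ is at most the decision boundary disagreement.) -/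

import Mathlib

open MeasureTheory

lemma integral_ite_one' {Θ : Type*} [MeasurableSpace Θ] (μ : Measure Θ) (P : Θ → Prop)
    [DecidablePred P] (hs : MeasurableSet {θ | P θ}) :
    ∫ θ, (if P θ then (1:ℝ) else 0) ∂μ = (μ {θ | P θ}).toReal := by
  rw [show (fun θ => if P θ then (1:ℝ) else 0) = Set.indicator {θ | P θ} (fun _ => 1) by
    ext θ; by_cases h : P θ <;> simp [h], integral_indicator_const _ hs, smul_eq_mul, mul_one, measureReal_def]

/-- First part of the proof of Lemma 2: if for `ν`-almost every `(x,y)` the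
label `y` attains the maximal `Q'`-probability of being predicted at `x`, then
the Gibbs risk of `Q'` under `ν` is bounded by the expected decision boundary
disagreement between `Q` and `Q'`. -/
theorem gibbs_risk_le_disagreement_of_ae_majority
    {α Θ : Type*} [MeasurableSpace α] [MeasurableSpace Θ]
    {k : ℕ} (hk : 2 ≤ k)
    (ν : Measure (α × Fin k)) [IsProbabilityMeasure ν]
    (Q Q' : Measure Θ) [IsProbabilityMeasure Q] [IsProbabilityMeasure Q']
    (g : Θ × α → Fin k) (hg : Measurable g)
    (hmaj : ∀ᵐ p ∂ν,
      Q' {θ | g (θ, p.1) = p.2} = ⨆ i : Fin k, Q' {θ | g (θ, p.1) = i}) :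
    (∫ p, ∫ θ', (if g (θ', p.1) ≠ p.2 then (1 : ℝ) else 0) ∂Q' ∂ν) ≤
      ∫ p, ∫ θ, ∫ θ',
        (if g (θ, p.1) ≠ g (θ', p.1) then (1 : ℝ) else 0) ∂Q' ∂Q ∂ν := by
  classical
  have hgx : ∀ x : α, Measurable fun θ : Θ => g (θ, x) :=
    fun x => hg.comp (measurable_id.prodMk measurable_const)
  have hS : ∀ (x : α) (i : Fin k), MeasurableSet {θ : Θ | g (θ, x) = i} := fun x i =>
    (hgx x) (measurableSet_singleton i)
  have hSne : ∀ (x : α) (i : Fin k), MeasurableSet {θ : Θ | g (θ, x) ≠ i} := fun x i =>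
    (hS x i).compl
  -- measurability of the big ite functions
  have hmeas1 : Measurable fun q : (α × Fin k) × Θ =>
      (if g (q.2, q.1.1) ≠ q.1.2 then (1:ℝ) else 0) := by
    refine Measurable.ite ?_ measurable_const measurable_const
    exact (measurableSet_eq_fun (hg.comp ((measurable_snd).prodMk (measurable_fst.fst)))
      (measurable_fst.snd)).compl
  have hmeas2 : Measurable fun q : ((α × Fin k) × Θ) × Θ =>
      (if g (q.1.2, q.1.1.1) ≠ g (q.2, q.1.1.1) then (1:ℝ) else 0) := by
    refine Measurable.ite ?_ measurable_const measurable_const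
    exact (measurableSet_eq_fun
      (hg.comp ((measurable_fst.snd).prodMk measurable_fst.fst.fst))
      (hg.comp ((measurable_snd).prodMk measurable_fst.fst.fst))).compl
  -- strong measurability of the integrated functions
  have hf1 : StronglyMeasurable fun p : α × Fin k =>
      ∫ θ', (if g (θ', p.1) ≠ p.2 then (1:ℝ) else 0) ∂Q' :=
    hmeas1.stronglyMeasurable.integral_prod_right'
  have hf2 : StronglyMeasurable fun p : α × Fin k =>
      ∫ θ, ∫ θ', (if g (θ, p.1) ≠ g (θ', p.1) then (1:ℝ) else 0) ∂Q' ∂Q :=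
    (hmeas2.stronglyMeasurable.integral_prod_right').integral_prod_right'
  have hb : ∀ (μ : Measure Θ) (_ : IsProbabilityMeasure μ) (f : Θ → ℝ),
      (∀ θ, ‖f θ‖ ≤ 1) → ‖∫ θ, f θ ∂μ‖ ≤ 1 := by
    intro μ hinst f hf
    calc ‖∫ θ, f θ ∂μ‖ ≤ 1 * (μ Set.univ).toReal :=
          norm_integral_le_of_norm_le_const (Filter.Eventually.of_forall hf)
      _ = 1 := by simp
  have hbite : ∀ (c : Prop) (_ : Decidable c), ‖(if c then (1:ℝ) else 0)‖ ≤ 1 := by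
    intro c hc; split <;> simp
  have hint1 : Integrable (fun p : α × Fin k =>
      ∫ θ', (if g (θ', p.1) ≠ p.2 then (1:ℝ) else 0) ∂Q') ν := by
    refine ⟨hf1.aestronglyMeasurable, HasFiniteIntegral.of_bounded (C := 1)
      (Filter.Eventually.of_forall fun p => ?_)⟩
    exact hb Q' inferInstance _ (fun θ' => hbite _ _)
  have hint2 : Integrable (fun p : α × Fin k =>
      ∫ θ, ∫ θ', (if g (θ, p.1) ≠ g (θ', p.1) then (1:ℝ) else 0) ∂Q' ∂Q) ν := by
    refine ⟨hf2.aestronglyMeasurable, HasFiniteIntegral.of_bounded (C := 1)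
      (Filter.Eventually.of_forall fun p => ?_)⟩
    exact hb Q inferInstance _ (fun θ => hb Q' inferInstance _ (fun θ' => hbite _ _))
  refine integral_mono_ae hint1 hint2 ?_
  filter_upwards [hmaj] with p hp
  obtain ⟨x, y⟩ := p
  simp only at hp ⊢
  -- key pointwise inequality
  have key : ∀ c : Fin k,
      (Q' {θ' | g (θ', x) ≠ y}).toReal ≤ (Q' {θ' | c ≠ g (θ', x)}).toReal := by
    intro c
    have h1 : Q' {θ' | g (θ', x) = c} ≤ Q' {θ' | g (θ', x) = y} := by
      rw [hp]; exact le_iSup (fun i => Q' {θ' | g (θ', x) = i}) c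
    have h2 : {θ' : Θ | c ≠ g (θ', x)} = {θ' | g (θ', x) = c}ᶜ := by
      ext θ'; simp [ne_comm, eq_comm]
    have h3 : {θ' : Θ | g (θ', x) ≠ y} = {θ' | g (θ', x) = y}ᶜ := rfl
    rw [h2, h3, prob_compl_eq_one_sub (hS x c), prob_compl_eq_one_sub (hS x y)]
    exact ENNReal.toReal_mono (ENNReal.sub_ne_top ENNReal.one_ne_top) (tsub_le_tsub_left h1 1)
  -- rewrite inner integrals
  rw [integral_ite_one' Q' (fun θ' => g (θ', x) ≠ y) (hSne x y)]
  have hrw : ∀ θ : Θ,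
      (∫ θ', (if g (θ, x) ≠ g (θ', x) then (1:ℝ) else 0) ∂Q') =
        (Q' {θ' | g (θ, x) ≠ g (θ', x)}).toReal := fun θ => by
    refine integral_ite_one' Q' (fun θ' => g (θ, x) ≠ g (θ', x)) ?_
    have : {θ' : Θ | g (θ, x) ≠ g (θ', x)} = {θ' | g (θ', x) = g (θ, x)}ᶜ := by
      ext θ'; simp [eq_comm]
    rw [this]; exact (hS x (g (θ, x))).compl
  calc (Q' {θ' | g (θ', x) ≠ y}).toReal
      = ∫ _θ, (Q' {θ' | g (θ', x) ≠ y}).toReal ∂Q := by simp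
    _ ≤ ∫ θ, ∫ θ', (if g (θ, x) ≠ g (θ', x) then (1:ℝ) else 0) ∂Q' ∂Q := by
        refine integral_mono (integrable_const _) ?_ fun θ => ?_
        · refine ⟨((hmeas2.stronglyMeasurable.integral_prod_right').comp_measurable
              (measurable_const.prodMk measurable_id :
                Measurable fun θ : Θ => (((x, y) : α × Fin k), θ))).aestronglyMeasurable,
            HasFiniteIntegral.of_bounded (C := 1)
            (Filter.Eventually.of_forall fun θ =>
              hb Q' inferInstance _ (fun θ' => hbite _ _))⟩
        · rw [hrw θ]; exact key (g (θ, x))
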